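/- Let k be a field and (B, 𝔤) a finitely generated almost commutative k-algebra. Then B satisfies condition (D): for every simple left module M over the polynomial ring B[X], the endomorphism φ(m) = X·m is algebraic over k; equivalently, there exists a nonzero polynomial g ∈ k[X] with g·M = 0. -/

import Mathlib

open Polynomial
open scoped DirectSum

section StableSpan

variable {R : Type} [CommRing R] {N : Type} [AddCommGroup N] [Module R N]

/-- A submodule stable under a family of endomorphisms. -/
def IsStable {d : ℕ} (γ : Fin d → Module.End R N) (p : Submodule R N) : Prop :=
  ∀ i : Fin d, ∀ x ∈ p, γ i x ∈ p

/-- The smallest submodule containing `s` stable under the family `γ`. -/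
def stSpan {d : ℕ} (γ : Fin d → Module.End R N) (s : Set N) : Submodule R N :=
  sInf {p | s ⊆ ↑p ∧ IsStable γ p}

lemma subset_stSpan {d : ℕ} (γ : Fin d → Module.End R N) (s : Set N) : s ⊆ ↑(stSpan γ s) := by
  intro x hx
  rw [SetLike.mem_coe, stSpan, Submodule.mem_sInf]
  exact fun p hp => hp.1 hx

lemma isStable_stSpan {d : ℕ} (γ : Fin d → Module.End R N) (s : Set N) :
    IsStable γ (stSpan γ s) := by
  intro i x hx
  rw [stSpan, Submodule.mem_sInf] at hx ⊢
  exact fun p hp => hp.2 i x (hx p hp)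

lemma stSpan_le {d : ℕ} {γ : Fin d → Module.End R N} {s : Set N} {p : Submodule R N}
    (h1 : s ⊆ ↑p) (h2 : IsStable γ p) : stSpan γ s ≤ p :=
  sInf_le ⟨h1, h2⟩

end StableSpan

/-- Key finiteness lemma: if `N` is generated by a single element under a noetherian ring `R`
and a finite family of pairwise commuting endomorphisms, then every stable submodule is
"generated" by finitely many of its elements. -/
theorem stable_fg : ∀ (d : ℕ) (R N : Type) [CommRing R] [IsNoetherianRing R]
    [AddCommGroup N] [Module R N] (γ : Fin d → Module.End R N)
    (_ : ∀ i j, γ i * γ j = γ j * γ i) (x₀ : N) (_ : stSpan γ {x₀} = ⊤)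
    (p : Submodule R N) (_ : IsStable γ p),
    ∃ t : Finset N, ↑t ⊆ (p : Set N) ∧ p ≤ stSpan γ ↑t := by
  intro d
  induction d with
  | zero =>
    intro R N _ _ _ _ γ hγ x₀ hspan p hp
    have h1 : Submodule.span R {x₀} = ⊤ := by
      apply top_unique
      rw [← hspan]
      exact stSpan_le Submodule.subset_span (fun i => i.elim0)
    haveI : Module.Finite R N := ⟨by rw [← h1]; exact Submodule.fg_span (Set.finite_singleton x₀)⟩
    haveI : IsNoetherian R N := isNoetherian_of_isNoetherianRing_of_finite R N
    obtain ⟨t, ht⟩ := (IsNoetherian.noetherian p : p.FG)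
    refine ⟨t, ?_, ?_⟩
    · rw [← ht]; exact Submodule.subset_span
    · rw [← ht]; exact Submodule.span_le.mpr (subset_stSpan _ _)
  | succ d IH =>
    intro R N _ _ _ _ γ hγ x₀ hspan p hp
    classical
    set φ : Module.End R N := γ (Fin.last d) with hφ
    set A := Module.AEval R N φ with hA
    set e : N ≃ₗ[R] A := Module.AEval.of R N φ with he
    -- the commuting family on A
    have hcomm : ∀ (i : Fin d) (m : N), γ i.castSucc (φ m) = φ (γ i.castSucc m) := by
      intro i m
      have := hγ i.castSucc (Fin.last d)
      calc γ i.castSucc (φ m) = (γ i.castSucc * γ (Fin.last d)) m := rfl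
        _ = (γ (Fin.last d) * γ i.castSucc) m := by rw [this]
        _ = φ (γ i.castSucc m) := rfl
    set γ' : Fin d → Module.End R[X] A := fun i =>
      LinearMap.ofAEval φ ((e : N →ₗ[R] A) ∘ₗ γ i.castSucc)
        (fun m => by
          simp only [LinearMap.comp_apply, LinearEquiv.coe_coe]
          show e (γ i.castSucc (φ • m)) = _
          rw [show φ • m = φ m from rfl, hcomm i m]
          exact (Module.AEval.X_smul_of φ _).symm) with hγ'def
    have hγ'apply : ∀ (i : Fin d) (m : N), γ' i (e m) = e (γ i.castSucc m) := by
      intro i m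
      rfl
    have hγ'comm : ∀ i j, γ' i * γ' j = γ' j * γ' i := by
      intro i j
      apply LinearMap.ext
      intro x
      obtain ⟨m, rfl⟩ := e.surjective x
      show γ' i (γ' j (e m)) = γ' j (γ' i (e m))
      rw [hγ'apply, hγ'apply, hγ'apply, hγ'apply]
      have h := hγ i.castSucc j.castSucc
      calc e (γ i.castSucc (γ j.castSucc m)) = e ((γ i.castSucc * γ j.castSucc) m) := rfl
        _ = e ((γ j.castSucc * γ i.castSucc) m) := by rw [h]
        _ = _ := rfl
    -- pull back an R[X]-submodule of A to an R-submodule of N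
    set pb : Submodule R[X] A → Submodule R N :=
      fun q' => (q'.restrictScalars R).comap (e : N →ₗ[R] A) with hpb
    have hpbmem : ∀ (q' : Submodule R[X] A) (m : N), m ∈ pb q' ↔ e m ∈ q' := fun _ _ => Iff.rfl
    have hpbphi : ∀ (q' : Submodule R[X] A), ∀ m ∈ pb q', φ m ∈ pb q' := by
      intro q' m hm
      rw [hpbmem] at hm ⊢
      have : e (φ m) = (X : R[X]) • e m := (Module.AEval.X_smul_of φ m).symm
      rw [this]
      exact q'.smul_mem _ hm
    have hpbstable : ∀ (q' : Submodule R[X] A), IsStable γ' q' → IsStable γ (pb q') := by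
      intro q' hq' i
      induction i using Fin.lastCases with
      | last => exact fun m hm => hpbphi q' m hm
      | cast j =>
        intro m hm
        rw [hpbmem] at hm ⊢
        rw [← hγ'apply]
        exact hq' j _ hm
    -- the span hypothesis transfers
    have hspan' : stSpan γ' {e x₀} = ⊤ := by
      apply top_unique
      apply le_sInf
      rintro q' ⟨hq1, hq2⟩
      have hx : x₀ ∈ pb q' := by rw [hpbmem]; exact hq1 rfl
      have hle : stSpan γ {x₀} ≤ pb q' :=
        stSpan_le (Set.singleton_subset_iff.mpr hx) (hpbstable q' hq2)
      rw [hspan] at hle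
      intro x _
      obtain ⟨m, rfl⟩ := e.surjective x
      exact (hpbmem q' m).mp (hle trivial)
    -- push forward p
    have hpinv : p ∈ (Algebra.lsmul R R N φ).invtSubmodule := by
      rw [Module.End.mem_invtSubmodule]
      intro m hm
      exact hp (Fin.last d) m hm
    set q : Submodule R[X] A := Module.AEval.mapSubmodule R N φ ⟨p, hpinv⟩ with hq
    have hqmem : ∀ (x : A), x ∈ q ↔ e.symm x ∈ p := by
      intro x; rw [hq, Module.AEval.mem_mapSubmodule_apply]
    have hqstable : IsStable γ' q := by
      intro i x hx
      rw [hqmem] at hx ⊢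
      obtain ⟨m, rfl⟩ := e.surjective x
      rw [hγ'apply]
      rw [LinearEquiv.symm_apply_apply] at hx ⊢
      exact hp i.castSucc _ hx
    obtain ⟨t', ht'sub, ht'le⟩ := IH R[X] A γ' hγ'comm (e x₀) hspan' q hqstable
    refine ⟨t'.image (fun x => e.symm x), ?_, ?_⟩
    · intro m hm
      simp only [Finset.coe_image, Set.mem_image, Finset.mem_coe] at hm
      obtain ⟨x, hx, rfl⟩ := hm
      exact (hqmem x).mp (ht'sub hx)
    · -- p ≤ stSpan γ t
      set W : Submodule R N := stSpan γ ↑(t'.image (fun x => e.symm x)) with hW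
      have hWphi : W ∈ (Algebra.lsmul R R N φ).invtSubmodule := by
        rw [Module.End.mem_invtSubmodule]
        intro m hm
        exact isStable_stSpan γ _ (Fin.last d) m hm
      set q₂ : Submodule R[X] A := Module.AEval.mapSubmodule R N φ ⟨W, hWphi⟩ with hq₂
      have hq₂mem : ∀ (x : A), x ∈ q₂ ↔ e.symm x ∈ W := by
        intro x; rw [hq₂, Module.AEval.mem_mapSubmodule_apply]
      have hq₂stable : IsStable γ' q₂ := by
        intro i x hx
        rw [hq₂mem] at hx ⊢
        obtain ⟨m, rfl⟩ := e.surjective x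
        rw [hγ'apply]
        rw [LinearEquiv.symm_apply_apply] at hx ⊢
        exact isStable_stSpan γ _ i.castSucc _ hx
      have hsub2 : ↑t' ⊆ (q₂ : Set A) := by
        intro x hx
        rw [SetLike.mem_coe, hq₂mem]
        apply subset_stSpan
        simp only [Finset.coe_image, Set.mem_image, Finset.mem_coe]
        exact ⟨x, hx, rfl⟩
      have : q ≤ q₂ := le_trans ht'le (stSpan_le hsub2 hq₂stable)
      intro m hm
      have : e m ∈ q₂ := this ((hqmem (e m)).mpr (by simpa using hm))
      rw [hq₂mem] at this
      simpa using this

/-- Uniform bound on torsion in the layers of a good filtration. -/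
theorem uniform_torsion
    {R : Type} [CommRing R] [IsDomain R] [IsNoetherianRing R]
    {M : Type} [AddCommGroup M] [Module R M]
    {d : ℕ} (w : Fin d → Module.End R M) (m₀ : M)
    (P : ℕ → Submodule R M)
    (hP0 : P 0 = ⊥)
    (hPsucc : ∀ n, P (n+1) = (P n ⊔ Submodule.span R {m₀}) ⊔ ⨆ i, (P n).map (w i))
    (hcomm : ∀ i j n, ∀ m ∈ P n, (w i) ((w j) m) - (w j) ((w i) m) ∈ P (n+1)) :
    ∃ f : R, f ≠ 0 ∧ ∀ n m, m ∈ P (n+1) → ∀ r : R, r ≠ 0 → r • m ∈ P n → f • m ∈ P n := by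
  classical
  have hmono1 : ∀ n, P n ≤ P (n+1) := fun n => by
    rw [hPsucc n]; exact le_sup_of_le_left le_sup_left
  have hmono : Monotone P := monotone_nat_of_le_succ hmono1
  have hw : ∀ (i : Fin d) n, ∀ m ∈ P n, w i m ∈ P (n+1) := by
    intro i n m hm
    rw [hPsucc n]
    apply Submodule.mem_sup_right
    exact (le_iSup (fun i => (P n).map (w i)) i) (Submodule.mem_map_of_mem hm)
  have hm₀ : m₀ ∈ P 1 := by
    rw [hPsucc 0]
    exact Submodule.mem_sup_left (Submodule.mem_sup_right (Submodule.mem_span_singleton_self m₀))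
  -- the associated graded module
  let Qm : ℕ → Type := fun n => ↥(P (n+1)) ⧸ (Submodule.comap (P (n+1)).subtype (P n))
  let G := ⨁ n, Qm n
  let mkc : ∀ n, ↥(P (n+1)) →ₗ[R] Qm n := fun n => (Submodule.comap (P (n+1)).subtype (P n)).mkQ
  let mkG : ∀ (n : ℕ), ↥(P (n+1)) →ₗ[R] G := fun n => (DirectSum.lof R ℕ Qm n) ∘ₗ mkc n
  have hmkzero : ∀ n (x : ↥(P (n+1))), x.1 ∈ P n → mkG n x = 0 := by
    intro n x hx
    have : mkc n x = 0 := (Submodule.Quotient.mk_eq_zero _).mpr hx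
    show DirectSum.lof R ℕ Qm n (mkc n x) = 0
    rw [this, map_zero]
  let wres : ∀ (i : Fin d) (n : ℕ), ↥(P (n+1)) →ₗ[R] ↥(P (n+2)) := fun i n =>
    (w i).restrict (fun x hx => hw i (n+1) x hx)
  have hwres : ∀ i n (x : ↥(P (n+1))), (wres i n x).1 = w i x.1 := fun i n x => rfl
  let qmap : ∀ (i : Fin d) (n : ℕ), Qm n →ₗ[R] Qm (n+1) := fun i n =>
    Submodule.mapQ _ _ (wres i n) (by
      intro x hx
      simp only [Submodule.mem_comap] at hx ⊢
      exact hw i n x.1 hx)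
  let γ : Fin d → Module.End R G := fun i =>
    DirectSum.toModule R ℕ G (fun n => (DirectSum.lof R ℕ Qm (n+1)) ∘ₗ qmap i n)
  have hγ_mk : ∀ i n (x : ↥(P (n+1))), γ i (mkG n x) = mkG (n+1) (wres i n x) := by
    intro i n x
    show DirectSum.toModule R ℕ G _ (DirectSum.lof R ℕ Qm n (mkc n x)) = _
    rw [DirectSum.toModule_lof]
    show DirectSum.lof R ℕ Qm (n+1) (qmap i n (mkc n x)) = DirectSum.lof R ℕ Qm (n+1) (mkc (n+1) (wres i n x))
    congr 1
  have hγcomm : ∀ i j, γ i * γ j = γ j * γ i := by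
    intro i j
    apply DirectSum.linearMap_ext
    intro n
    apply LinearMap.ext
    intro q
    obtain ⟨x, rfl⟩ := Submodule.mkQ_surjective _ q
    show (γ i) ((γ j) (mkG n x)) = (γ j) ((γ i) (mkG n x))
    rw [hγ_mk, hγ_mk, hγ_mk, hγ_mk]
    show DirectSum.lof R ℕ Qm (n+2) (mkc (n+2) _) = DirectSum.lof R ℕ Qm (n+2) (mkc (n+2) _)
    congr 1
    show Submodule.Quotient.mk ((wres i (n+1)) ((wres j n) x)) =
      Submodule.Quotient.mk ((wres j (n+1)) ((wres i n) x))
    rw [Submodule.Quotient.eq]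
    show ((wres i (n+1)) ((wres j n) x) - (wres j (n+1)) ((wres i n) x)).1 ∈ P (n+2)
    have hsub : ((wres i (n+1)) ((wres j n) x) - (wres j (n+1)) ((wres i n) x)).1
        = (w i) ((w j) x.1) - (w j) ((w i) x.1) := by
      simp [hwres]
    rw [hsub]
    exact hcomm i j (n+1) x.1 x.2
  -- the graded module is generated by the class of m₀ over the stable span
  set x₀ : G := mkG 0 ⟨m₀, hm₀⟩ with hx₀
  set V : Submodule R G := stSpan γ {x₀} with hV
  have hx₀V : x₀ ∈ V := Submodule.mem_sInf.mpr fun p hp => hp.1 (Set.mem_singleton x₀)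
  have hVst : IsStable (R := R) (N := G) γ V := fun i x hx => Submodule.mem_sInf.mpr fun p hp => hp.2 i x (Submodule.mem_sInf.mp hx p hp)
  have key : ∀ n (x : ↥(P (n+1))), mkG n x ∈ V := by
    have claim : ∀ n, P (n+1) ≤
        Submodule.map (P (n+1)).subtype (Submodule.comap (mkG n) V) := by
      intro n
      induction n with
      | zero =>
        refine le_trans (le_of_eq (hPsucc 0)) (sup_le (sup_le ?_ ?_) ?_)
        · rw [hP0]; exact bot_le
        · rw [Submodule.span_le, Set.singleton_subset_iff]
          exact ⟨⟨m₀, hm₀⟩, hx₀V, rfl⟩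
        · refine iSup_le fun i => ?_
          rw [hP0, Submodule.map_bot]
          exact bot_le
      | succ n IH =>
        have hPle : ∀ m (hm : m ∈ P (n+1)), m ∈
            Submodule.map (P (n+2)).subtype (Submodule.comap (mkG (n+1)) V) := by
          intro m hm
          refine ⟨⟨m, hmono1 _ hm⟩, ?_, rfl⟩
          show mkG (n+1) ⟨m, hmono1 _ hm⟩ ∈ V
          rw [hmkzero (n+1) ⟨m, hmono1 _ hm⟩ hm]
          exact V.zero_mem
        refine le_trans (le_of_eq (hPsucc (n+1))) (sup_le (sup_le ?_ ?_) ?_)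
        · exact fun m hm => hPle m hm
        · rw [Submodule.span_le, Set.singleton_subset_iff]
          exact hPle m₀ (hmono (by omega : 1 ≤ n+1) hm₀)
        · refine iSup_le fun i => ?_
          rw [Submodule.map_le_iff_le_comap]
          intro m hm
          obtain ⟨y, hy, hyx⟩ := IH hm
          rw [Submodule.mem_comap]
          refine ⟨wres i n y, ?_, by show ((wres i n) y).1 = (w i) m; rw [hwres]; exact congrArg (w i) hyx⟩
          show mkG (n+1) (wres i n y) ∈ V
          rw [← hγ_mk i n y]
          exact hVst i _ hy
    intro n x
    have := claim n x.2
    obtain ⟨y, hy, hyx⟩ := this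
    have : y = x := Subtype.ext hyx
    rwa [this] at hy
  have hspan : stSpan γ {x₀} = ⊤ := by
    apply top_unique
    intro g hg
    clear hg
    induction g using DirectSum.induction_on with
    | zero => exact V.zero_mem
    | of n q =>
      obtain ⟨x, rfl⟩ := Submodule.mkQ_surjective _ q
      have h2 : DirectSum.of Qm n ((Submodule.comap (P (n+1)).subtype (P n)).mkQ x) = mkG n x :=
        (DirectSum.lof_eq_of R ℕ Qm n _).symm
      rw [h2]
      exact key n x
    | add a b ha hb => exact V.add_mem ha hb
  -- the torsion submodule
  let T : Submodule R G :=
    { carrier := {x | ∃ r : R, r ≠ 0 ∧ r • x = 0}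
      add_mem' := by
        rintro a b ⟨r1, hr1, h1⟩ ⟨r2, hr2, h2⟩
        refine ⟨r1 * r2, mul_ne_zero hr1 hr2, ?_⟩
        have e1 : (r1 * r2) • a = 0 := by rw [mul_comm, mul_smul, h1, smul_zero]
        have e2 : (r1 * r2) • b = 0 := by rw [mul_smul, h2, smul_zero]
        rw [smul_add, e1, e2, add_zero]
      zero_mem' := ⟨1, one_ne_zero, smul_zero 1⟩
      smul_mem' := by
        rintro c x ⟨r, hr, h⟩
        exact ⟨r, hr, by rw [smul_comm, h, smul_zero]⟩ }
  have hTstable : IsStable (R := R) (N := G) γ T := by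
    rintro i x ⟨r, hr, h⟩
    exact ⟨r, hr, by rw [← map_smul, h, map_zero]⟩
  obtain ⟨t, htsub, htle⟩ := stable_fg d R G γ hγcomm x₀ hspan T hTstable
  have hsel : ∀ x ∈ t, ∃ r : R, r ≠ 0 ∧ r • x = 0 := fun x hx => htsub hx
  choose! rt hrt0 hrtk using hsel
  set f : R := ∏ x ∈ t, rt x with hf
  have hf0 : f ≠ 0 := Finset.prod_ne_zero_iff.mpr hrt0
  let K : Submodule R G :=
    { carrier := {x | f • x = 0}
      add_mem' := by
        intro a b ha hb
        show f • (a + b) = 0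
        rw [smul_add, ha, hb, add_zero]
      zero_mem' := smul_zero f
      smul_mem' := by
        intro c x hx
        show f • (c • x) = 0
        rw [smul_comm, hx, smul_zero] }
  have hKstable : IsStable (R := R) (N := G) γ K := by
    intro i x hx
    show f • (γ i) x = 0
    rw [← map_smul, hx, map_zero]
  have htK : ↑t ⊆ (K : Set G) := by
    intro x hx
    show f • x = 0
    obtain ⟨c, hc⟩ := Finset.dvd_prod_of_mem rt hx
    rw [← hf] at hc
    rw [hc, mul_comm, mul_smul, hrtk x hx, smul_zero]
  have hTK : T ≤ K := le_trans htle (stSpan_le htK hKstable)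
  refine ⟨f, hf0, ?_⟩
  intro n m hm r hr0 hrm
  have hxT : mkG n ⟨m, hm⟩ ∈ T := by
    refine ⟨r, hr0, ?_⟩
    rw [← map_smul]
    exact hmkzero n (r • ⟨m, hm⟩) hrm
  have hxK : f • mkG n ⟨m, hm⟩ = 0 := hTK hxT
  rw [← map_smul] at hxK
  -- extract membership
  have hmkc : mkc n (f • ⟨m, hm⟩) = 0 := by
    have h3 : DirectSum.of Qm n (mkc n (f • ⟨m, hm⟩)) = 0 := by
      rw [show DirectSum.of Qm n (mkc n (f • ⟨m, hm⟩)) = mkG n (f • ⟨m, hm⟩) from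
        (DirectSum.lof_eq_of R ℕ Qm n _).symm]
      exact hxK
    exact DirectSum.of_injective n (by rw [h3, map_zero])
  have h4 : (f • (⟨m, hm⟩ : ↥(P (n+1)))) ∈ Submodule.comap (P (n+1)).subtype (P n) :=
    (Submodule.Quotient.mk_eq_zero (Submodule.comap (P (n+1)).subtype (P n))).mp hmkc
  exact h4

/-- Let `k` be a field and `(B, 𝔤)` a finitely generated almost commutative `k`-algebra:
`𝔤 ⊆ B` is a finite-dimensional `k`-subspace, closed under commutators, with
`B = Σ_{n ≥ 0} 𝔤ⁿ`.  Then `B` satisfies condition (D): for every simple left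
`B[X]`-module `M` there is a nonzero polynomial `g ∈ k[X]` with `g • M = 0`
(equivalently, the endomorphism `φ(m) = X • m` is algebraic over `k`). -/
theorem almost_commutative_condition_D (k B : Type) [Field k] [Ring B] [Algebra k B]
    (𝔤 : Submodule k B) (hfg : 𝔤.FG)
    (hlie : ∀ x ∈ 𝔤, ∀ y ∈ 𝔤, x * y - y * x ∈ 𝔤)
    (hgen : (⨆ n : ℕ, 𝔤 ^ n) = ⊤) :
    ∀ (M : Type) [AddCommGroup M] [Module (Polynomial B) M],
      IsSimpleModule (Polynomial B) M →
      ∃ g : Polynomial k, g ≠ 0 ∧ ∀ m : M, (g.map (algebraMap k B)) • m = 0 := by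
  classical
  intro M _ _ hsimple
  haveI := hsimple
  by_contra hcon
  push_neg at hcon
  -- hcon : ∀ g, g ≠ 0 → ∃ m, ¬ (map g • m = 0)
  set θ : Polynomial k →+* Polynomial B := Polynomial.mapRingHom (algebraMap k B) with hθ
  -- centrality of the image of θ
  have hcent : ∀ (r : Polynomial k) (a : Polynomial B), θ r * a = a * θ r := by
    intro r a
    induction r using Polynomial.induction_on with
    | C c =>
      have h1 : θ (Polynomial.C c) = algebraMap k (Polynomial B) c := by
        rw [hθ]
        simp [Polynomial.algebraMap_apply]
      rw [h1, Algebra.commutes]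
    | add p q hp hq => rw [map_add, add_mul, mul_add, hp, hq]
    | monomial n c ih =>
      have h1 : θ (Polynomial.C c * Polynomial.X ^ (n+1))
          = θ (Polynomial.C c * Polynomial.X ^ n) * Polynomial.X := by
        rw [pow_succ, ← mul_assoc, map_mul]
        congr 1
        simp [hθ]
      rw [h1]
      set u : Polynomial B := θ (Polynomial.C c * Polynomial.X ^ n) with hu
      calc u * Polynomial.X * a = u * (Polynomial.X * a) := mul_assoc _ _ _
        _ = u * (a * Polynomial.X) := by rw [Polynomial.X_mul]
        _ = u * a * Polynomial.X := (mul_assoc _ _ _).symm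
        _ = a * u * Polynomial.X := by rw [ih]
        _ = a * (u * Polynomial.X) := mul_assoc _ _ _
  letI : Module (Polynomial k) M := Module.compHom M θ
  have hsm : ∀ (r : Polynomial k) (m : M), r • m = θ r • m := fun r m => rfl
  have hcon' : ∀ g : Polynomial k, g ≠ 0 → ∃ m : M, g • m ≠ 0 := by
    intro g hg
    obtain ⟨m, hm⟩ := hcon g hg
    exact ⟨m, hm⟩
  have hsmul_comm : ∀ (a : Polynomial B) (r : Polynomial k) (m : M),
      a • (r • m) = r • (a • m) := by
    intro a r m
    rw [hsm, hsm, ← mul_smul, ← mul_smul, hcent]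
  -- bijectivity of the action of nonzero central polynomials
  have hbij : ∀ g : Polynomial k, g ≠ 0 → Function.Bijective (fun m : M => g • m) := by
    intro g hg
    obtain ⟨m1, hm1⟩ := hcon' g hg
    constructor
    · -- injectivity
      let Kg : Submodule (Polynomial B) M :=
        { carrier := {m | g • m = 0}
          add_mem' := by
            intro a b ha hb
            show g • (a + b) = 0
            rw [smul_add, ha, hb, add_zero]
          zero_mem' := smul_zero g
          smul_mem' := by
            intro a m hm
            show g • (a • m) = 0
            rw [← hsmul_comm, hm, smul_zero] }
      rcases eq_bot_or_eq_top Kg with hbot | htop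
      · intro x y hxy
        have : g • (x - y) = 0 := by
          simp only at hxy
          rw [smul_sub, hxy, sub_self]
        have hx : x - y ∈ Kg := this
        rw [hbot, Submodule.mem_bot] at hx
        exact sub_eq_zero.mp hx
      · exfalso
        apply hm1
        have : m1 ∈ Kg := by rw [htop]; trivial
        exact this
    · -- surjectivity
      let Ig : Submodule (Polynomial B) M :=
        { carrier := Set.range (fun m : M => g • m)
          add_mem' := by
            rintro _ _ ⟨a, rfl⟩ ⟨b, rfl⟩
            exact ⟨a + b, smul_add g a b⟩
          zero_mem' := ⟨0, smul_zero g⟩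
          smul_mem' := by
            rintro a _ ⟨m, rfl⟩
            exact ⟨a • m, (hsmul_comm a g m).symm⟩ }
      rcases eq_bot_or_eq_top Ig with hbot | htop
      · exfalso
        have : g • m1 ∈ Ig := ⟨m1, rfl⟩
        rw [hbot, Submodule.mem_bot] at this
        exact hm1 this
      · intro y
        have hy : y ∈ Ig := by rw [htop]; trivial
        exact hy
  haveI : Nontrivial M := IsSimpleModule.nontrivial (Polynomial B) M
  obtain ⟨m₀, hm₀ne⟩ := exists_ne (0 : M)
  -- generators of 𝔤
  obtain ⟨s, hs⟩ := hfg
  set d := s.card with hd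
  set bb : Fin d → B := fun i => (s.equivFin.symm i : B) with hbb
  have hbb𝔤 : ∀ i, bb i ∈ 𝔤 := by
    intro i
    rw [← hs]
    exact Submodule.subset_span (s.equivFin.symm i).2
  have hspan_s : ∀ x ∈ 𝔤, x ∈ Submodule.span k (Set.range bb) := by
    intro x hx
    rw [← hs] at hx
    refine Submodule.span_mono ?_ hx
    intro b hb
    exact ⟨s.equivFin ⟨b, hb⟩, by simp [hbb]⟩
  -- the operators
  set μ : Fin d → Module.End (Polynomial k) M := fun i =>
    { toFun := fun m => (Polynomial.C (bb i) : Polynomial B) • m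
      map_add' := fun a b => smul_add _ a b
      map_smul' := fun r m => by
        simp only [RingHom.id_apply]
        exact hsmul_comm _ r m } with hμ
  have hμapp : ∀ i (m : M), μ i m = (Polynomial.C (bb i) : Polynomial B) • m := fun i m => rfl
  -- the filtration
  set P : ℕ → Submodule (Polynomial k) M := fun n => Nat.rec ⊥
    (fun _ Pn => (Pn ⊔ Submodule.span (Polynomial k) {m₀}) ⊔ ⨆ i, Pn.map (μ i)) n with hP
  have hP0 : P 0 = ⊥ := rfl
  have hPsucc : ∀ n, P (n+1) = (P n ⊔ Submodule.span (Polynomial k) {m₀}) ⊔ ⨆ i, (P n).map (μ i) :=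
    fun n => rfl
  have hmono1 : ∀ n, P n ≤ P (n+1) := fun n => by
    rw [hPsucc n]; exact le_sup_of_le_left le_sup_left
  have hmonoP : Monotone P := monotone_nat_of_le_succ hmono1
  have hμmem : ∀ (i : Fin d) n, ∀ m ∈ P n, μ i m ∈ P (n+1) := by
    intro i n m hm
    rw [hPsucc n]
    apply Submodule.mem_sup_right
    exact (le_iSup (fun i => (P n).map (μ i)) i) (Submodule.mem_map_of_mem hm)
  have hP1 : P 1 = Submodule.span (Polynomial k) {m₀} := by
    have h := hPsucc 0
    rw [hP0] at h
    simpa using h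
  have hm₀P1 : m₀ ∈ P 1 := by
    rw [hP1]; exact Submodule.mem_span_singleton_self m₀
  -- action of C x for x ∈ 𝔤
  have hCact : ∀ x ∈ 𝔤, ∀ n, ∀ m ∈ P n, (Polynomial.C x : Polynomial B) • m ∈ P (n+1) := by
    intro x hx
    have hx' : x ∈ Submodule.span k (Set.range bb) := hspan_s x hx
    clear hx
    induction hx' using Submodule.span_induction with
    | mem b hb =>
      obtain ⟨i, rfl⟩ := hb
      intro n m hm
      exact hμmem i n m hm
    | zero =>
      intro n m hm
      rw [map_zero, zero_smul]
      exact (P (n+1)).zero_mem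
    | add a b _ _ ha hb =>
      intro n m hm
      rw [map_add, add_smul]
      exact (P (n+1)).add_mem (ha n m hm) (hb n m hm)
    | smul c b _ hb =>
      intro n m hm
      have h1 : (Polynomial.C (c • b) : Polynomial B)
          = θ (Polynomial.C c) * Polynomial.C b := by
        rw [Algebra.smul_def, map_mul]
        congr 1
        rw [hθ]
        simp
      rw [h1, mul_smul, ← hsm]
      exact (P (n+1)).smul_mem _ (hb n m hm)
  have hcommP : ∀ i j n, ∀ m ∈ P n, (μ i) ((μ j) m) - (μ j) ((μ i) m) ∈ P (n+1) := by
    intro i j n m hm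
    have h1 : (μ i) ((μ j) m) - (μ j) ((μ i) m)
        = (Polynomial.C (bb i * bb j - bb j * bb i) : Polynomial B) • m := by
      rw [hμapp, hμapp, hμapp, hμapp, ← mul_smul, ← mul_smul, ← sub_smul,
        ← Polynomial.C_mul, ← Polynomial.C_mul, ← map_sub]
    rw [h1]
    exact hCact _ (hlie _ (hbb𝔤 i) _ (hbb𝔤 j)) n m hm
  -- uniform torsion bound
  obtain ⟨f, hf0, hft⟩ := uniform_torsion μ m₀ P hP0 hPsucc hcommP
  -- X-stability
  have hX : ∀ n, ∀ m ∈ P n, (Polynomial.X : Polynomial B) • m ∈ P n := by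
    intro n m hm
    have h1 : (Polynomial.X : Polynomial B) = θ Polynomial.X := by simp [hθ]
    rw [h1, ← hsm]
    exact (P n).smul_mem _ hm
  -- powers of 𝔤
  have hpow : ∀ (j : ℕ), ∀ x ∈ 𝔤 ^ j, ∀ n, ∀ m ∈ P n,
      (Polynomial.C x : Polynomial B) • m ∈ P (n + j) := by
    intro j
    induction j with
    | zero =>
      intro x hx n m hm
      rw [pow_zero] at hx
      obtain ⟨c, rfl⟩ := Submodule.mem_one.mp hx
      have h1 : (Polynomial.C (algebraMap k B c) : Polynomial B) = θ (Polynomial.C c) := by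
        simp [hθ]
      rw [h1, ← hsm]
      exact (P (n + 0)).smul_mem _ hm
    | succ j ih =>
      intro x hx
      rw [pow_succ] at hx
      refine Submodule.mul_induction_on (C := fun y => ∀ n, ∀ m ∈ P n,
        (Polynomial.C y : Polynomial B) • m ∈ P (n + (j+1))) hx ?_ ?_
      · intro a ha b hb
        intro n m hm
        have h1 : (Polynomial.C (a * b) : Polynomial B) • m
            = (Polynomial.C a : Polynomial B) • ((Polynomial.C b : Polynomial B) • m) := by
          rw [← mul_smul, ← Polynomial.C_mul]
        rw [h1]
        have h2 : (Polynomial.C b : Polynomial B) • m ∈ P (n + 1) := hCact b hb n m hm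
        have h3 := ih a ha (n+1) _ h2
        have h4 : n + 1 + j = n + (j + 1) := by omega
        rwa [h4] at h3
      · intro a b ha hb
        intro n m hm
        have h1 : (Polynomial.C (a + b) : Polynomial B) • m
            = (Polynomial.C a : Polynomial B) • m + (Polynomial.C b : Polynomial B) • m := by
          rw [← add_smul, ← Polynomial.C_add]
        rw [h1]
        exact (P (n + (j+1))).add_mem (ha n m hm) (hb n m hm)
  -- exhaustion
  have hsmul_closed : ∀ (a : Polynomial B) (m : M) (n : ℕ), m ∈ P n → ∃ n', a • m ∈ P n' := by
    intro a
    induction a using Polynomial.induction_on' with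
    | add p q hp hq =>
      intro m n hm
      obtain ⟨n1, h1⟩ := hp m n hm
      obtain ⟨n2, h2⟩ := hq m n hm
      refine ⟨max n1 n2, ?_⟩
      rw [add_smul]
      exact Submodule.add_mem _ (hmonoP (le_max_left _ _) h1) (hmonoP (le_max_right _ _) h2)
    | monomial j b =>
      intro m n hm
      have hXj : (Polynomial.X : Polynomial B)^j • m ∈ P n := by
        clear hm₀ne
        induction j with
        | zero => simpa using hm
        | succ j ihj =>
          rw [pow_succ', mul_smul]
          exact hX n _ (by exact ihj)
      have hb : b ∈ (⨆ i : ℕ, 𝔤 ^ i) := by rw [hgen]; trivial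
      have hexb : ∀ (m' : M) (q : ℕ), m' ∈ P q →
          ∃ q', (Polynomial.C b : Polynomial B) • m' ∈ P q' := by
        refine Submodule.iSup_induction (fun i : ℕ => 𝔤 ^ i)
          (motive := fun y => ∀ (m' : M) (q : ℕ), m' ∈ P q →
            ∃ q', (Polynomial.C y : Polynomial B) • m' ∈ P q') hb ?_ ?_ ?_
        · intro i x hx m' q hmq
          exact ⟨q + i, hpow i x hx q m' hmq⟩
        · intro m' q hmq
          refine ⟨q, ?_⟩
          rw [map_zero, zero_smul]
          exact (P q).zero_mem
        · intro x y hx hy m' q hmq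
          obtain ⟨q1, h1⟩ := hx m' q hmq
          obtain ⟨q2, h2⟩ := hy m' q hmq
          refine ⟨max q1 q2, ?_⟩
          have h3 : (Polynomial.C (x + y) : Polynomial B) • m'
              = (Polynomial.C x : Polynomial B) • m' + (Polynomial.C y : Polynomial B) • m' := by
            rw [← add_smul, ← Polynomial.C_add]
          rw [h3]
          exact Submodule.add_mem _ (hmonoP (le_max_left _ _) h1) (hmonoP (le_max_right _ _) h2)
      obtain ⟨q', hq'⟩ := hexb ((Polynomial.X : Polynomial B)^j • m) n hXj
      refine ⟨q', ?_⟩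
      have h5 : (Polynomial.monomial j b : Polynomial B) • m
          = (Polynomial.C b : Polynomial B) • ((Polynomial.X : Polynomial B)^j • m) := by
        rw [← mul_smul, Polynomial.C_mul_X_pow_eq_monomial]
      rwa [h5]
  have hexh : ∀ m : M, ∃ n, m ∈ P n := by
    let U : Submodule (Polynomial B) M :=
      { carrier := {m | ∃ n, m ∈ P n}
        zero_mem' := ⟨0, (P 0).zero_mem⟩
        add_mem' := by
          rintro a b ⟨n1, h1⟩ ⟨n2, h2⟩
          exact ⟨max n1 n2, Submodule.add_mem _ (hmonoP (le_max_left _ _) h1)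
            (hmonoP (le_max_right _ _) h2)⟩
        smul_mem' := by
          rintro a m ⟨n, hn⟩
          exact hsmul_closed a m n hn }
    rcases eq_bot_or_eq_top U with hbot | htop
    · exfalso
      apply hm₀ne
      have : m₀ ∈ U := ⟨1, hm₀P1⟩
      rwa [hbot, Submodule.mem_bot] at this
    · intro m
      have : m ∈ U := by rw [htop]; trivial
      exact this
  -- an irreducible p not dividing f
  have hq0 : (f * Polynomial.X + 1 : Polynomial k) ≠ 0 ∧
      ¬ IsUnit (f * Polynomial.X + 1 : Polynomial k) := by
    have hdeg : (f * Polynomial.X + 1 : Polynomial k).degree = f.degree + 1 := by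
      rw [Polynomial.degree_add_eq_left_of_degree_lt, Polynomial.degree_mul, Polynomial.degree_X]
      rw [Polynomial.degree_mul, Polynomial.degree_X, Polynomial.degree_one]
      have h0 : (0 : WithBot ℕ) ≤ f.degree := Polynomial.zero_le_degree_iff.mpr hf0
      calc (0 : WithBot ℕ) < 0 + 1 := by norm_num
        _ ≤ f.degree + 1 := by exact add_le_add_left h0 1
    have hdegpos : 0 < (f * Polynomial.X + 1 : Polynomial k).degree := by
      rw [hdeg]
      have h0 : (0 : WithBot ℕ) ≤ f.degree := Polynomial.zero_le_degree_iff.mpr hf0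
      calc (0 : WithBot ℕ) < 0 + 1 := by norm_num
        _ ≤ f.degree + 1 := add_le_add_left h0 1
    constructor
    · intro h
      rw [h, Polynomial.degree_zero] at hdegpos
      exact absurd hdegpos (by simp)
    · intro h
      rw [Polynomial.isUnit_iff_degree_eq_zero.mp h] at hdegpos
      exact lt_irrefl _ hdegpos
  obtain ⟨p, hpirr, hpdvd⟩ := WfDvdMonoid.exists_irreducible_factor hq0.2 hq0.1
  have hpf : ¬ p ∣ f := by
    intro hdvd
    have h1 : p ∣ f * Polynomial.X := hdvd.mul_right _
    have h2 : p ∣ 1 := (dvd_add_right h1).mp hpdvd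
    exact hpirr.not_isUnit (isUnit_of_dvd_one h2)
  have hpne : p ≠ 0 := hpirr.ne_zero
  -- descent
  have hdesc : ∀ (N : ℕ) (u : M), u ∈ P N → p • u ∈ P 1 → ∃ e, (f^e : Polynomial k) • u ∈ P 1 := by
    intro N
    induction N with
    | zero =>
      intro u hu _
      rw [hP0, Submodule.mem_bot] at hu
      exact ⟨0, by rw [hu, smul_zero]; exact (P 1).zero_mem⟩
    | succ N ihN =>
      intro u hu hpu
      by_cases hN : N = 0
      · subst hN
        exact ⟨0, by rw [pow_zero, one_smul]; exact hu⟩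
      · have hN1 : 1 ≤ N := Nat.one_le_iff_ne_zero.mpr hN
        have hpu' : p • u ∈ P N := hmonoP hN1 hpu
        have hfu : f • u ∈ P N := hft N u hu p hpne hpu'
        have hpfu : p • (f • u) ∈ P 1 := by
          rw [← mul_smul, mul_comm, mul_smul]
          exact (P 1).smul_mem f hpu
        obtain ⟨e, he⟩ := ihN (f • u) hfu hpfu
        refine ⟨e + 1, ?_⟩
        rw [pow_succ, mul_smul]
        exact he
  -- final contradiction
  obtain ⟨u, hu⟩ := (hbij p hpne).2 m₀
  simp only at hu
  have hpu1 : p • u ∈ P 1 := by rw [hu]; exact hm₀P1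
  obtain ⟨Nu, hNu⟩ := hexh u
  obtain ⟨e, he⟩ := hdesc Nu u hNu hpu1
  rw [hP1, Submodule.mem_span_singleton] at he
  obtain ⟨c, hc⟩ := he
  have hkey : ((p * c : Polynomial k)) • m₀ = (f^e : Polynomial k) • m₀ := by
    rw [mul_smul, hc, ← mul_smul, mul_comm, mul_smul, hu]
  have hzero : (p * c - f^e : Polynomial k) • m₀ = 0 := by
    rw [sub_smul, hkey, sub_self]
  have heq : (p * c : Polynomial k) = f^e := by
    by_contra hne
    have hne' : (p * c - f^e : Polynomial k) ≠ 0 := sub_ne_zero.mpr hne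
    apply hm₀ne
    have hinj := (hbij _ hne').1
    have h0 : (p * c - f^e : Polynomial k) • (0 : M) = 0 := smul_zero _
    exact hinj (by simp only; rw [hzero, h0])
  have hdvd : p ∣ f^e := Dvd.intro _ heq
  exact hpf (hpirr.prime.dvd_of_dvd_pow hdvd)
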